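/- arXiv:1710.07497 — 3 statements merged into one kernel-verified Lean document; each statement's English description precedes it below -/
import Mathlib

section
/- For any matrix A in F_q^{m×n} there exists a partition S_0, S_1, ..., S_n of [n] into pairwise disjoint (possibly empty) sets such that: (i) for every i in S_0, every x in ker(A) has x_i = 0; (ii) if i, j belong to the same class S_u with u ≥ 1, then there exists s in F_q \ {0} such that every x in ker(A) satisfies x_j = s x_i, and the marginal of each coordinate in S_u under the uniform distribution on ker(A) is uniform on F_q; (iii) if i in S_u and j in S_v with 1 ≤ u < v, then under the uniform distribution on ker(A) the pair (x_i, x_j) is uniform on F_q × F_q. -/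
set_option linter.unusedSectionVars false

lemma aux_fiber_count {K W : Type*} [AddCommGroup K] [AddCommGroup W] [Finite K] [Fintype W]
    (φ : K →+ W) (hφ : Function.Surjective φ) (w : W) :
    Nat.card {x : K // φ x = w} * Fintype.card W = Nat.card K := by
  classical
  cases nonempty_fintype K
  have hconst : ∀ v : W, Nat.card {x : K // φ x = v} = Nat.card {x : K // φ x = 0} := by
    intro v
    obtain ⟨x₀, hx₀⟩ := hφ v
    exact Nat.card_congr
      { toFun := fun x => ⟨x.1 - x₀, by simp [map_sub, x.2, hx₀]⟩
        invFun := fun y => ⟨y.1 + x₀, by simp [map_add, y.2, hx₀]⟩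
        left_inv := fun x => by simp
        right_inv := fun y => by simp }
  have h1 : Nat.card K = ∑ v : W, Nat.card {x : K // φ x = v} := by
    rw [← Nat.card_congr (Equiv.sigmaFiberEquiv φ)]
    simp only [Nat.card_eq_fintype_card]
    exact Fintype.card_sigma
  rw [h1]
  simp only [hconst, Finset.sum_const, Finset.card_univ, smul_eq_mul, mul_comm]

section Aux
variable {F : Type*} [Field F] [Fintype F] {m n : ℕ} (A : Matrix (Fin m) (Fin n) F)

lemma aux_single (i : Fin n) (h : ∃ x : Fin n → F, A.mulVec x = 0 ∧ x i ≠ 0) (σ : F) :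
    Nat.card {x : Fin n → F // A.mulVec x = 0 ∧ x i = σ} * Fintype.card F
      = Nat.card {x : Fin n → F // A.mulVec x = 0} := by
  classical
  set K := LinearMap.ker A.mulVecLin with hK
  have hmem : ∀ x : Fin n → F, x ∈ K ↔ A.mulVec x = 0 := by
    intro x; simp [hK, LinearMap.mem_ker, Matrix.mulVecLin_apply]
  set φ : K →+ F := AddMonoidHom.mk' (fun y : K => (y : Fin n → F) i) (fun a b => rfl) with hφdef
  have hsurj : Function.Surjective φ := by
    intro σ'
    obtain ⟨a, ha, hai⟩ := h
    refine ⟨(σ' / a i) • ⟨a, (hmem a).2 ha⟩, ?_⟩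
    simp [hφdef]
    field_simp
  have e1 : {x : Fin n → F // A.mulVec x = 0 ∧ x i = σ} ≃ {y : K // φ y = σ} :=
    { toFun := fun x => ⟨⟨x.1, (hmem x.1).2 x.2.1⟩, x.2.2⟩
      invFun := fun y => ⟨y.1.1, (hmem y.1.1).1 y.1.2, y.2⟩
      left_inv := fun x => rfl
      right_inv := fun y => rfl }
  have e2 : {x : Fin n → F // A.mulVec x = 0} ≃ K :=
    Equiv.subtypeEquivRight (fun x => (hmem x).symm)
  rw [Nat.card_congr e1, Nat.card_congr e2]
  exact aux_fiber_count φ hsurj σ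

lemma aux_pair (i j : Fin n)
    (hi : ∃ x : Fin n → F, A.mulVec x = 0 ∧ x i ≠ 0)
    (hj : ∃ x : Fin n → F, A.mulVec x = 0 ∧ x j ≠ 0)
    (hne : ∀ s : F, s ≠ 0 → ∃ x : Fin n → F, A.mulVec x = 0 ∧ x j ≠ s * x i)
    (σ τ : F) :
    Nat.card {x : Fin n → F // A.mulVec x = 0 ∧ x i = σ ∧ x j = τ} * Fintype.card F ^ 2
      = Nat.card {x : Fin n → F // A.mulVec x = 0} := by
  classical
  set K := LinearMap.ker A.mulVecLin with hK
  have hmem : ∀ x : Fin n → F, x ∈ K ↔ A.mulVec x = 0 := by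
    intro x; simp [hK, LinearMap.mem_ker, Matrix.mulVecLin_apply]
  set φ : K →+ F × F := AddMonoidHom.mk'
    (fun y : K => ((y : Fin n → F) i, (y : Fin n → F) j)) (fun a b => rfl) with hφdef
  -- find a ∈ K with a i = 1
  obtain ⟨a₀, ha₀, hai₀⟩ := hi
  set a : K := (a₀ i)⁻¹ • ⟨a₀, (hmem a₀).2 ha₀⟩ with hadef
  have hai : (a : Fin n → F) i = 1 := by
    simp [hadef, inv_mul_cancel₀ hai₀]
  set s : F := (a : Fin n → F) j with hsdef
  -- find b ∈ K with b j ≠ s * b i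
  have hb : ∃ b : K, (b : Fin n → F) j ≠ s * (b : Fin n → F) i := by
    by_cases hs : s = 0
    · obtain ⟨b, hb0, hbj⟩ := hj
      exact ⟨⟨b, (hmem b).2 hb0⟩, by simp [hs, hbj]⟩
    · obtain ⟨b, hb0, hbj⟩ := hne s hs
      exact ⟨⟨b, (hmem b).2 hb0⟩, hbj⟩
  obtain ⟨b, hbj⟩ := hb
  set b' : K := b - ((b : Fin n → F) i) • a with hb'def
  have hb'i : (b' : Fin n → F) i = 0 := by
    simp [hb'def, hai]
  have hb'j : (b' : Fin n → F) j ≠ 0 := by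
    simp only [hb'def, Submodule.coe_sub, Submodule.coe_smul, Pi.sub_apply, Pi.smul_apply,
      smul_eq_mul, ← hsdef]
    intro h
    rw [mul_comm] at h
    exact hbj (sub_eq_zero.mp h)
  have hsurj : Function.Surjective φ := by
    rintro ⟨σ', τ'⟩
    refine ⟨σ' • a + ((τ' - σ' * s) / ((b' : Fin n → F) j)) • b', ?_⟩
    simp only [hφdef, AddMonoidHom.mk'_apply, Submodule.coe_add, Submodule.coe_smul,
      Pi.add_apply, Pi.smul_apply, smul_eq_mul, hai, hb'i, ← hsdef]
    rw [div_mul_cancel₀ _ hb'j]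
    simp only [Prod.mk.injEq]
    constructor <;> ring
  have e1 : {x : Fin n → F // A.mulVec x = 0 ∧ x i = σ ∧ x j = τ} ≃ {y : K // φ y = (σ, τ)} :=
    { toFun := fun x => ⟨⟨x.1, (hmem x.1).2 x.2.1⟩, by
        simp [hφdef, x.2.2.1, x.2.2.2]⟩
      invFun := fun y => ⟨y.1.1, (hmem y.1.1).1 y.1.2, by
        have := y.2
        simp only [hφdef, AddMonoidHom.mk'_apply, Prod.mk.injEq] at this
        exact this⟩
      left_inv := fun x => rfl
      right_inv := fun y => rfl }
  have e2 : {x : Fin n → F // A.mulVec x = 0} ≃ K :=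
    Equiv.subtypeEquivRight (fun x => (hmem x).symm)
  rw [Nat.card_congr e1, Nat.card_congr e2]
  have := aux_fiber_count φ hsurj (σ, τ)
  rwa [Fintype.card_prod, ← sq] at this

end Aux

theorem kernel_coordinate_decomposition
    (F : Type*) [Field F] [Fintype F] [DecidableEq F]
    (m n : ℕ) (A : Matrix (Fin m) (Fin n) F) :
    ∃ S : Fin (n + 1) → Finset (Fin n),
      (∀ u v : Fin (n + 1), u ≠ v → Disjoint (S u) (S v)) ∧
      (∀ i : Fin n, ∃ u, i ∈ S u) ∧
      (∀ i ∈ S 0, ∀ x : Fin n → F, A.mulVec x = 0 → x i = 0) ∧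
      (∀ u : Fin (n + 1), 1 ≤ u.val →
        (∀ i ∈ S u, ∀ j ∈ S u, ∃ s : F, s ≠ 0 ∧
          ∀ x : Fin n → F, A.mulVec x = 0 → x j = s * x i) ∧
        (∀ i ∈ S u, ∀ σ : F,
          Nat.card {x : Fin n → F // A.mulVec x = 0 ∧ x i = σ} * Fintype.card F
            = Nat.card {x : Fin n → F // A.mulVec x = 0})) ∧
      (∀ u v : Fin (n + 1), 1 ≤ u.val → u.val < v.val →
        ∀ i ∈ S u, ∀ j ∈ S v, ∀ σ τ : F,
          Nat.card {x : Fin n → F // A.mulVec x = 0 ∧ x i = σ ∧ x j = τ} * Fintype.card F ^ 2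
            = Nat.card {x : Fin n → F // A.mulVec x = 0}) := by
  classical
  -- zero coordinates and the proportionality relation
  set Z : Fin n → Prop := fun i => ∀ x : Fin n → F, A.mulVec x = 0 → x i = 0 with hZ
  set E : Fin n → Fin n → Prop := fun i j =>
    ∃ s : F, s ≠ 0 ∧ ∀ x : Fin n → F, A.mulVec x = 0 → x j = s * x i with hE
  have Erefl : ∀ i, E i i := fun i => ⟨1, one_ne_zero, fun x _ => (one_mul _).symm⟩
  have Esymm : ∀ {i j}, E i j → E j i := by
    rintro i j ⟨s, hs, h⟩
    exact ⟨s⁻¹, inv_ne_zero hs, fun x hx => by rw [h x hx, inv_mul_cancel_left₀ hs]⟩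
  have Etrans : ∀ {i j k}, E i j → E j k → E i k := by
    rintro i j k ⟨s, hs, h⟩ ⟨t, ht, h'⟩
    exact ⟨t * s, mul_ne_zero ht hs, fun x hx => by rw [h' x hx, h x hx, mul_assoc]⟩
  -- representatives
  have hcls : ∀ i : Fin n, (Finset.univ.filter (fun j => E i j)).Nonempty :=
    fun i => ⟨i, by simp [Erefl i]⟩
  set rep : Fin n → Fin n := fun i => (Finset.univ.filter (fun j => E i j)).min' (hcls i)
    with hrep
  have hErep : ∀ i, E i (rep i) := by
    intro i
    have := Finset.min'_mem _ (hcls i)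
    simpa using this
  have hrepeq : ∀ {i j}, E i j → rep i = rep j := by
    intro i j hij
    have : (Finset.univ.filter (fun k => E i k)) = (Finset.univ.filter (fun k => E j k)) := by
      ext k
      simp only [Finset.mem_filter, Finset.mem_univ, true_and]
      exact ⟨fun h => Etrans (Esymm hij) h, fun h => Etrans hij h⟩
    simp [hrep, this]
  -- the partition
  set g : Fin n → Fin (n + 1) := fun i => if Z i then 0 else (rep i).succ with hg
  refine ⟨fun u => Finset.univ.filter (fun i => g i = u), ?_, ?_, ?_, ?_, ?_⟩
  · intro u v huv
    simp only [Finset.disjoint_left, Finset.mem_filter, Finset.mem_univ, true_and]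
    rintro i hi hi'
    exact huv (hi ▸ hi')
  · intro i
    exact ⟨g i, by simp⟩
  · intro i hi x hx
    simp only [Finset.mem_filter, Finset.mem_univ, true_and, hg] at hi
    by_cases hzi : Z i
    · exact hzi x hx
    · rw [if_neg hzi] at hi
      exact absurd hi (Fin.succ_ne_zero _)
  · intro u hu
    have hu0 : u ≠ 0 := by
      rintro rfl; simp only [Fin.val_zero] at hu; omega
    have hmem' : ∀ i, i ∈ Finset.univ.filter (fun i => g i = u) → ¬ Z i ∧ (rep i).succ = u := by
      intro i hi
      simp only [Finset.mem_filter, Finset.mem_univ, true_and, hg] at hi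
      by_cases hzi : Z i
      · rw [if_pos hzi] at hi; exact absurd hi.symm hu0
      · rw [if_neg hzi] at hi; exact ⟨hzi, hi⟩
    constructor
    · intro i hi j hj
      obtain ⟨hzi, hri⟩ := hmem' i hi
      obtain ⟨hzj, hrj⟩ := hmem' j hj
      have hr : rep i = rep j := Fin.succ_inj.mp (hri.trans hrj.symm)
      exact Etrans (hErep i) (hr ▸ Esymm (hErep j))
    · intro i hi σ
      obtain ⟨hzi, _⟩ := hmem' i hi
      have : ∃ x : Fin n → F, A.mulVec x = 0 ∧ x i ≠ 0 := by
        by_contra hc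
        push_neg at hc
        exact hzi fun x hx => hc x hx
      exact aux_single A i this σ
  · intro u v hu huv i hi j hj σ τ
    have hu0 : u ≠ 0 := by
      rintro rfl; simp only [Fin.val_zero] at hu; omega
    have hv0 : v ≠ 0 := by
      rintro rfl; simp only [Fin.val_zero] at huv; omega
    have hmem' : ∀ (w : Fin (n+1)), w ≠ 0 → ∀ i, i ∈ Finset.univ.filter (fun i => g i = w) →
        ¬ Z i ∧ (rep i).succ = w := by
      intro w hw0 i hi
      simp only [Finset.mem_filter, Finset.mem_univ, true_and, hg] at hi
      by_cases hzi : Z i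
      · rw [if_pos hzi] at hi; exact absurd hi.symm hw0
      · rw [if_neg hzi] at hi; exact ⟨hzi, hi⟩
    obtain ⟨hzi, hri⟩ := hmem' u hu0 i hi
    obtain ⟨hzj, hrj⟩ := hmem' v hv0 j hj
    have hnE : ¬ E i j := by
      intro h
      have := hrepeq h
      rw [this, hrj] at hri
      rw [hri] at huv
      omega
    have hi' : ∃ x : Fin n → F, A.mulVec x = 0 ∧ x i ≠ 0 := by
      by_contra hc; push_neg at hc; exact hzi fun x hx => hc x hx
    have hj' : ∃ x : Fin n → F, A.mulVec x = 0 ∧ x j ≠ 0 := by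
      by_contra hc; push_neg at hc; exact hzj fun x hx => hc x hx
    have hne : ∀ s : F, s ≠ 0 → ∃ x : Fin n → F, A.mulVec x = 0 ∧ x j ≠ s * x i := by
      intro s hs
      by_contra hcon
      push_neg at hcon
      exact hnE ⟨s, hs, fun x hx => hcon x hx⟩
    exact aux_pair A i j hi' hj' hne σ τ
end

section
/- Let k ≥ 3, d > 0, φ(α) = exp(-d α^{k-1}) + d α^{k-1} - (d(k-1)/k) α^k - d/k, ρ = ρ_{k,d} = sup{x in [0,1] : x = 1 - exp(-d x^{k-1})}, and suppose that ρ - d ρ^{k-1} + d(1-1/k) ρ^k ≥ 0 (i.e., d ≤ d_k). Then sup_{α in [0,1]} φ(α) = φ(0) = 1 - d/k. -/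
open Real Set

private lemma P_mono (m : ℕ) (hm : 1 ≤ m) :
    MonotoneOn (fun t : ℝ => t ^ m * (1 - t)) (Icc 0 ((m : ℝ) / ((m : ℝ) + 1))) := by
  apply monotoneOn_of_deriv_nonneg (convex_Icc _ _)
  · fun_prop
  · intro t _
    exact DifferentiableAt.differentiableWithinAt (by fun_prop)
  · intro t ht
    rw [interior_Icc] at ht
    have h1 : HasDerivAt (fun t : ℝ => t ^ m * (1 - t))
        ((m : ℝ) * t ^ (m - 1) * (1 - t) + t ^ m * (-1)) t :=
      (hasDerivAt_pow m t).mul ((hasDerivAt_id t).const_sub 1)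
    rw [h1.deriv]
    have ht1 : t * ((m : ℝ) + 1) ≤ (m : ℝ) := by
      have := ht.2.le
      rwa [le_div_iff₀ (by positivity)] at this
    have hpow : (0:ℝ) ≤ t ^ (m - 1) := pow_nonneg ht.1.le _
    have hrw : t ^ m = t ^ (m - 1) * t := by
      rw [← pow_succ]; congr 1; omega
    rw [hrw]; nlinarith

private lemma P_anti (m : ℕ) (hm : 1 ≤ m) :
    AntitoneOn (fun t : ℝ => t ^ m * (1 - t)) (Icc ((m : ℝ) / ((m : ℝ) + 1)) 1) := by
  apply antitoneOn_of_deriv_nonpos (convex_Icc _ _)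
  · fun_prop
  · intro t _
    exact DifferentiableAt.differentiableWithinAt (by fun_prop)
  · intro t ht
    rw [interior_Icc] at ht
    have h1 : HasDerivAt (fun t : ℝ => t ^ m * (1 - t))
        ((m : ℝ) * t ^ (m - 1) * (1 - t) + t ^ m * (-1)) t :=
      (hasDerivAt_pow m t).mul ((hasDerivAt_id t).const_sub 1)
    rw [h1.deriv]
    have ht0 : 0 < t := lt_of_le_of_lt (by positivity) ht.1
    have ht1 : (m : ℝ) ≤ t * ((m : ℝ) + 1) := by
      have := ht.1.le
      rwa [div_le_iff₀ (by positivity)] at this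
    have hpow : (0:ℝ) ≤ t ^ (m - 1) := pow_nonneg ht0.le _
    have hrw : t ^ m = t ^ (m - 1) * t := by
      rw [← pow_succ]; congr 1; omega
    rw [hrw]; nlinarith

/-- Interval property: the set `{t ∈ (0,1) : 0 ≤ d t^n + log(1-t)}` is convex. -/
private lemma interval_lemma (n : ℕ) (hn : 2 ≤ n) (d : ℝ) (hd : 0 < d)
    {x y z : ℝ} (hx : 0 < x) (hxy : x < y) (hyz : y < z) (hz1 : z < 1)
    (hHx : 0 ≤ d * x ^ n + Real.log (1 - x))
    (hHz : 0 ≤ d * z ^ n + Real.log (1 - z)) :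
    0 ≤ d * y ^ n + Real.log (1 - y) := by
  by_contra hneg
  push_neg at hneg
  set H : ℝ → ℝ := fun t => d * t ^ n + Real.log (1 - t) with hH
  set H' : ℝ → ℝ := fun t => d * ((n : ℝ) * t ^ (n - 1)) - (1 - t)⁻¹ with hH'
  have hHd : ∀ t : ℝ, t < 1 → HasDerivAt H (H' t) t := by
    intro t ht
    have h1 : HasDerivAt (fun t : ℝ => d * t ^ n) (d * ((n : ℝ) * t ^ (n - 1))) t :=
      (hasDerivAt_pow n t).const_mul d
    have h2 : HasDerivAt (fun t : ℝ => 1 - t) (-1) t := (hasDerivAt_id t).const_sub 1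
    have h3 : HasDerivAt (fun t : ℝ => Real.log (1 - t)) ((-1) / (1 - t)) t :=
      h2.log (by intro h0; rw [sub_eq_zero] at h0; exact absurd h0.symm (ne_of_lt ht))
    have h4 := h1.add h3
    have : d * ((n : ℝ) * t ^ (n - 1)) + (-1) / (1 - t) = H' t := by
      rw [hH']; ring
    rwa [this] at h4
  have hcont : ∀ a b : ℝ, b < 1 → ContinuousOn H (Icc a b) := by
    intro a b hb t ht
    exact ((hHd t (lt_of_le_of_lt ht.2 hb)).differentiableAt.continuousAt).continuousWithinAt
  obtain ⟨p, hp, hpEq⟩ := exists_hasDerivAt_eq_slope H H' hxy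
    (hcont x y (by linarith)) (fun t ht => hHd t (by linarith [ht.2]))
  obtain ⟨q, hq, hqEq⟩ := exists_hasDerivAt_eq_slope H H' hyz
    (hcont y z (by linarith)) (fun t ht => hHd t (by linarith [ht.2]))
  have hp0 : 0 < p := lt_trans hx hp.1
  have hp1 : p < 1 := by linarith [hp.2, hq.1, hq.2]
  have hq1 : q < 1 := by linarith [hq.2]
  have hq0 : 0 < q := by linarith [hq.1, hp.2]
  have hpq : p < q := by linarith [hp.2, hq.1]
  have hHp : H' p < 0 := by
    rw [hpEq]
    apply div_neg_of_neg_of_pos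
    · simp only [hH]; linarith
    · linarith
  have hHq : 0 < H' q := by
    rw [hqEq]
    apply div_pos
    · simp only [hH]; linarith
    · linarith
  set m := n - 1 with hm
  have hm1 : 1 ≤ m := by omega
  have hPp : d * (n : ℝ) * (p ^ m * (1 - p)) < 1 := by
    have h1 : d * ((n : ℝ) * p ^ m) < (1 - p)⁻¹ := by
      have := hHp
      rw [hH'] at this
      simp only at this
      linarith
    have h2 : d * ((n : ℝ) * p ^ m) * (1 - p) < (1 - p)⁻¹ * (1 - p) :=
      mul_lt_mul_of_pos_right h1 (by linarith)
    rw [inv_mul_cancel₀ (by linarith : (1:ℝ) - p ≠ 0)] at h2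
    calc d * (n : ℝ) * (p ^ m * (1 - p)) = d * ((n : ℝ) * p ^ m) * (1 - p) := by ring
      _ < 1 := h2
  have hPq : 1 < d * (n : ℝ) * (q ^ m * (1 - q)) := by
    have h1 : (1 - q)⁻¹ < d * ((n : ℝ) * q ^ m) := by
      have := hHq
      rw [hH'] at this
      simp only at this
      linarith
    have h2 : (1 - q)⁻¹ * (1 - q) < d * ((n : ℝ) * q ^ m) * (1 - q) :=
      mul_lt_mul_of_pos_right h1 (by linarith)
    rw [inv_mul_cancel₀ (by linarith : (1:ℝ) - q ≠ 0)] at h2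
    calc (1:ℝ) = (1 - q)⁻¹ * (1 - q) := by
          rw [inv_mul_cancel₀ (by linarith : (1:ℝ) - q ≠ 0)]
      _ < d * ((n : ℝ) * q ^ m) * (1 - q) := by
          exact mul_lt_mul_of_pos_right h1 (by linarith)
      _ = d * (n : ℝ) * (q ^ m * (1 - q)) := by ring
  have hmn : (m : ℝ) + 1 = (n : ℝ) := by
    have : (m : ℝ) = (n : ℝ) - 1 := by
      rw [hm]
      push_cast [Nat.cast_sub (by omega : 1 ≤ n)]
      ring
    linarith
  set c : ℝ := (m : ℝ) / ((m : ℝ) + 1) with hc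
  have hc0 : 0 ≤ c := by positivity
  have hc1 : c < 1 := by
    rw [hc]
    rw [div_lt_one (by positivity)]
    linarith
  rcases le_or_gt c p with hcp | hcp
  · -- P antitone on [c,1], contradiction with hPp, hPq
    have hPanti := P_anti m hm1
    have hple : q ^ m * (1 - q) ≤ p ^ m * (1 - p) :=
      hPanti ⟨hcp, hp1.le⟩ ⟨le_trans hcp hpq.le, hq1.le⟩ hpq.le
    have hdn : (0:ℝ) ≤ d * (n : ℝ) := by positivity
    nlinarith
  · -- H strictly decreasing on [0,p], contradiction with hHx
    have hPmono := P_mono m hm1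
    have hanti : StrictAntiOn H (Icc 0 p) := by
      apply strictAntiOn_of_deriv_neg (convex_Icc _ _) (hcont 0 p hp1)
      intro t ht
      rw [interior_Icc] at ht
      rw [(hHd t (by linarith [ht.2])).deriv]
      have ht0 : 0 < t := ht.1
      have htp : t < p := ht.2
      have hPle : t ^ m * (1 - t) ≤ p ^ m * (1 - p) :=
        hPmono ⟨ht0.le, by linarith⟩ ⟨hp0.le, hcp.le⟩ htp.le
      have hkey : d * ((n : ℝ) * t ^ m) * (1 - t) < 1 := by
        have hdn : (0:ℝ) ≤ d * (n : ℝ) := by positivity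
        nlinarith
      have h1t : 0 < 1 - t := by linarith [hc1]
      rw [hH']
      simp only
      by_contra hge
      push_neg at hge
      have : (1 - t)⁻¹ ≤ d * ((n : ℝ) * t ^ m) := by linarith
      have h2 : (1 - t)⁻¹ * (1 - t) ≤ d * ((n : ℝ) * t ^ m) * (1 - t) :=
        mul_le_mul_of_nonneg_right this h1t.le
      rw [inv_mul_cancel₀ (ne_of_gt h1t)] at h2
      linarith
    have hH0 : H 0 = 0 := by
      rw [hH]
      simp [zero_pow (by omega : n ≠ 0)]
    have := hanti (show (0:ℝ) ∈ Icc 0 p from ⟨le_refl _, hp0.le⟩)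
      (show x ∈ Icc 0 p from ⟨hx.le, hp.1.le⟩) hx
    rw [hH0] at this
    exact absurd hHx (not_le.mpr this)

theorem phi_sup_at_zero_below_threshold
    (k : ℕ) (hk : 3 ≤ k) (d : ℝ) (hd : 0 < d)
    (φ : ℝ → ℝ)
    (hφ : φ = fun α => Real.exp (-d * α ^ (k - 1)) + d * α ^ (k - 1)
      - d * ((k : ℝ) - 1) / k * α ^ k - d / k)
    (ρ : ℝ)
    (hρ : ρ = sSup {x : ℝ | x ∈ Set.Icc (0 : ℝ) 1 ∧ x = 1 - Real.exp (-d * x ^ (k - 1))})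
    (hcond : 0 ≤ ρ - d * ρ ^ (k - 1) + d * (1 - 1 / (k : ℝ)) * ρ ^ k) :
    (∀ α ∈ Set.Icc (0 : ℝ) 1, φ α ≤ 1 - d / k) ∧ φ 0 = 1 - d / k := by
  set n := k - 1 with hn
  have hn2 : 2 ≤ n := by omega
  have hK0 : (0:ℝ) < (k:ℝ) := by positivity
  have hKne : (k:ℝ) ≠ 0 := ne_of_gt hK0
  have hkn : ((n : ℕ) : ℝ) = (k : ℝ) - 1 := by
    rw [hn]
    push_cast [Nat.cast_sub (by omega : 1 ≤ k)]
    ring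
  set f : ℝ → ℝ := fun t => 1 - Real.exp (-d * t ^ n) - t with hf
  set S : Set ℝ := {x : ℝ | x ∈ Set.Icc (0 : ℝ) 1 ∧ x = 1 - Real.exp (-d * x ^ n)} with hS
  -- basic facts about S and ρ
  have hS0 : (0:ℝ) ∈ S := by
    constructor
    · exact ⟨le_refl _, zero_le_one⟩
    · simp [zero_pow (by omega : n ≠ 0)]
  have hSbdd : BddAbove S := ⟨1, fun x hx => hx.1.2⟩
  have hSclosed : IsClosed S := by
    have : S = Set.Icc (0:ℝ) 1 ∩ {x : ℝ | x = 1 - Real.exp (-d * x ^ n)} := rfl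
    rw [this]
    exact isClosed_Icc.inter (isClosed_eq continuous_id (by fun_prop))
  have hρmem : ρ ∈ S := by
    rw [hρ]
    exact hSclosed.csSup_mem ⟨0, hS0⟩ hSbdd
  have hρ0 : 0 ≤ ρ := hρmem.1.1
  have hρle1 : ρ ≤ 1 := hρmem.1.2
  have hρeq : ρ = 1 - Real.exp (-d * ρ ^ n) := hρmem.2
  have hρ1 : ρ < 1 := by
    rcases lt_or_eq_of_le hρle1 with h | h
    · exact h
    · exfalso
      rw [h] at hρeq
      have := Real.exp_pos (-d * (1:ℝ) ^ n)
      linarith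
  have hub : ∀ x, x ∈ S → x ≤ ρ := by
    intro x hx
    rw [hρ]
    exact le_csSup hSbdd hx
  have hfρ : f ρ = 0 := by
    simp only [hf]
    linarith
  have hf0 : f 0 = 0 := by
    simp only [hf]
    simp [zero_pow (by omega : n ≠ 0)]
  have hfcont : Continuous f := by
    rw [hf]; fun_prop
  -- Fact A: beyond ρ, f is negative
  have factA : ∀ t, ρ < t → t ≤ 1 → f t < 0 := by
    intro t ht ht1
    by_contra hge
    push_neg at hge
    have hft1 : f 1 < 0 := by
      simp only [hf]
      have := Real.exp_pos (-d * (1:ℝ) ^ n)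
      linarith
    have h0mem : (0:ℝ) ∈ Set.Icc (f 1) (f t) := ⟨hft1.le, hge⟩
    obtain ⟨y, hy, hyEq⟩ := intermediate_value_Icc' ht1 hfcont.continuousOn h0mem
    have hyS : y ∈ S := by
      constructor
      · exact ⟨le_trans hρ0 (le_trans ht.le hy.1), hy.2⟩
      · simp only [hf] at hyEq
        linarith
    have := hub y hyS
    linarith [hy.1]
  -- equivalence between f-sign and H-sign
  have hHh : ∀ t : ℝ, t < 1 → (0 ≤ f t ↔ 0 ≤ d * t ^ n + Real.log (1 - t)) := by
    intro t ht1
    have h1t : (0:ℝ) < 1 - t := by linarith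
    constructor
    · intro h
      simp only [hf] at h
      have hle : Real.exp (-d * t ^ n) ≤ 1 - t := by linarith
      have := (Real.le_log_iff_exp_le h1t).mpr hle
      linarith
    · intro h
      have hle : -d * t ^ n ≤ Real.log (1 - t) := by linarith
      have := (Real.le_log_iff_exp_le h1t).mp hle
      simp only [hf]
      linarith
  -- derivative of φ
  have hder : ∀ t : ℝ, HasDerivAt φ (d * (n : ℝ) * t ^ (n - 1) * f t) t := by
    intro t
    have h1 : HasDerivAt (fun α : ℝ => -d * α ^ n) (-d * ((n : ℝ) * t ^ (n - 1))) t :=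
      (hasDerivAt_pow n t).const_mul (-d)
    have h2 : HasDerivAt (fun α : ℝ => Real.exp (-d * α ^ n))
        (Real.exp (-d * t ^ n) * (-d * ((n : ℝ) * t ^ (n - 1)))) t := h1.exp
    have h3 : HasDerivAt (fun α : ℝ => d * α ^ n) (d * ((n : ℝ) * t ^ (n - 1))) t :=
      (hasDerivAt_pow n t).const_mul d
    have h4 : HasDerivAt (fun α : ℝ => d * ((k:ℝ) - 1) / k * α ^ k)
        (d * ((k:ℝ) - 1) / k * ((k : ℝ) * t ^ (k - 1))) t :=
      (hasDerivAt_pow k t).const_mul _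
    have h5 := ((h2.add h3).sub h4).sub_const (d / (k:ℝ))
    rw [hφ]
    refine h5.congr_deriv ?_
    symm
    rw [← hn]
    simp only [hf]
    rw [hkn]
    have hpowrw : t ^ n = t ^ (n - 1) * t := by
      rw [← pow_succ]; congr 1; omega
    rw [hpowrw]
    field_simp
    ring
  have hφcont : Continuous φ := by
    rw [hφ]; fun_prop
  -- monotonicity helpers
  have claimA : ∀ a b : ℝ, 0 ≤ a → (∀ t ∈ Set.Ioo a b, f t ≤ 0) →
      AntitoneOn φ (Set.Icc a b) := by
    intro a b ha hneg
    apply antitoneOn_of_deriv_nonpos (convex_Icc _ _) hφcont.continuousOn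
    · intro t _
      exact (hder t).differentiableAt.differentiableWithinAt
    · intro t ht
      rw [interior_Icc] at ht
      rw [(hder t).deriv]
      have h1 : (0:ℝ) ≤ d * (n : ℝ) * t ^ (n - 1) := by
        have : 0 < t := lt_of_le_of_lt ha ht.1
        positivity
      exact mul_nonpos_of_nonneg_of_nonpos h1 (hneg t ht)
  have claimB : ∀ a b : ℝ, 0 ≤ a → (∀ t ∈ Set.Ioo a b, 0 ≤ f t) →
      MonotoneOn φ (Set.Icc a b) := by
    intro a b ha hpos
    apply monotoneOn_of_deriv_nonneg (convex_Icc _ _) hφcont.continuousOn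
    · intro t _
      exact (hder t).differentiableAt.differentiableWithinAt
    · intro t ht
      rw [interior_Icc] at ht
      rw [(hder t).deriv]
      have h1 : (0:ℝ) ≤ d * (n : ℝ) * t ^ (n - 1) := by
        have : 0 < t := lt_of_le_of_lt ha ht.1
        positivity
      exact mul_nonneg h1 (hpos t ht)
  -- value at 0
  have hφ0 : φ 0 = 1 - d / k := by
    rw [hφ]
    simp [zero_pow (by omega : n ≠ 0), zero_pow (by omega : k ≠ 0)]
  -- value at ρ
  have hφρ : φ ρ ≤ 1 - d / k := by
    rw [hφ]
    simp only
    have hexpρ : Real.exp (-d * ρ ^ n) = 1 - ρ := by linarith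
    rw [hexpρ]
    have hc' : d * ((k:ℝ) - 1) / k * ρ ^ k = d * (1 - 1 / k) * ρ ^ k := by
      field_simp
    rw [hc']
    linarith
  refine ⟨?_, hφ0⟩
  intro α hα
  rcases eq_or_lt_of_le hα.1 with h0 | h0
  · rw [← h0, hφ0]
  · by_cases hαρ : ρ ≤ α
    · -- φ antitone on [ρ,1]
      have hA := claimA ρ 1 hρ0 (fun t ht => (factA t ht.1 ht.2.le).le)
      have := hA ⟨le_refl _, hρle1⟩ ⟨hαρ, hα.2⟩ hαρ
      linarith
    · push_neg at hαρ
      by_cases hcase : ∀ t ∈ Set.Ioo (0:ℝ) α, f t ≤ 0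
      · have hA := claimA 0 α (le_refl _) hcase
        have := hA ⟨le_refl _, h0.le⟩ ⟨h0.le, le_refl _⟩ h0.le
        linarith
      · push_neg at hcase
        obtain ⟨s, hs, hfs⟩ := hcase
        have hpos : ∀ t ∈ Set.Ioo α ρ, 0 ≤ f t := by
          intro t ht
          by_contra hneg
          push_neg at hneg
          have hs1 : s < 1 := by linarith [hs.2, ht.1, ht.2]
          have ht1 : t < 1 := by linarith [ht.2]
          have hHs : 0 ≤ d * s ^ n + Real.log (1 - s) := (hHh s hs1).mp hfs.le
          have hHρ : 0 ≤ d * ρ ^ n + Real.log (1 - ρ) := (hHh ρ hρ1).mp (le_of_eq hfρ.symm)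
          have hst : s < t := lt_trans hs.2 ht.1
          have := interval_lemma n hn2 d hd hs.1 hst ht.2 hρ1 hHs hHρ
          have := (hHh t ht1).mpr this
          linarith
        have hB := claimB α ρ h0.le hpos
        have := hB ⟨le_refl _, hαρ.le⟩ ⟨hαρ.le, le_refl _⟩ hαρ.le
        linarith
end

section
/- Let k ≥ 3 and d > 0, and let ρ be the largest fixed point in [0,1] of f(α) = 1 - exp(-d α^{k-1}). If ρ - d ρ^{k-1} + d(1-1/k) ρ^k < 0 (i.e., d > d_k), then the function φ(α) = exp(-d α^{k-1}) + d α^{k-1} - (d(k-1)/k) α^k - d/k attains its supremum on [0,1] at α = ρ, and this supremum equals 1 - d/k - ρ + d ρ^{k-1} - (d(k-1)/k) ρ^k. -/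
noncomputable def qfun (κ u : ℝ) : ℝ := (κ - 1) * Real.log u + 1 / u - 1

noncomputable def hfun (κ c : ℝ) : ℝ := -c - (1 - (κ - 1) / κ * c) * Real.log (1 - c)

lemma q_deriv (κ : ℝ) {u : ℝ} (hu : 0 < u) :
    HasDerivAt (qfun κ) (((κ - 1) * u - 1) / u ^ 2) u := by
  have h1 : HasDerivAt (fun u => (κ - 1) * Real.log u) ((κ - 1) * u⁻¹) u :=
    (Real.hasDerivAt_log hu.ne').const_mul (κ - 1)
  have h2 : HasDerivAt (fun u : ℝ => 1 / u) (-(u ^ 2)⁻¹) u := by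
    simpa [one_div] using hasDerivAt_inv hu.ne'
  have := (h1.add h2).sub_const 1
  refine this.congr_deriv ?_
  field_simp
  ring

lemma h_deriv (κ : ℝ) (hκ : κ ≠ 0) {c : ℝ} (hc : c < 1) :
    HasDerivAt (hfun κ) (qfun κ (1 - c) / κ) c := by
  have hne : (1 : ℝ) - c ≠ 0 := by linarith
  have hid : HasDerivAt (fun x : ℝ => 1 - x) (-1) c := (hasDerivAt_id c).const_sub 1
  have hlog : HasDerivAt (fun x : ℝ => Real.log (1 - x)) ((1 - c)⁻¹ * -1) c :=
    (Real.hasDerivAt_log hne).comp c hid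
  have hu : HasDerivAt (fun x : ℝ => 1 - (κ - 1) / κ * x) (-((κ - 1) / κ)) c := by
    simpa using ((hasDerivAt_id c).const_mul ((κ - 1) / κ)).const_sub 1
  have hmul := hu.mul hlog
  have := ((hasDerivAt_id c).neg).sub hmul
  refine this.congr_deriv ?_
  unfold qfun
  field_simp
  ring

lemma q_one (κ : ℝ) : qfun κ 1 = 0 := by simp [qfun]

lemma q_pos_of_lt {κ : ℝ} (hκ : 3 ≤ κ) {u u' : ℝ} (hu' : 0 < u') (huu : u' < u)
    (hu1 : u < 1) (hq : 0 ≤ qfun κ u) : 0 < qfun κ u' := by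
  have hκ1 : 0 < κ - 1 := by linarith
  set a : ℝ := 1 / (κ - 1) with ha
  have ha0 : 0 < a := by positivity
  have ha1 : a ≤ 1 := by
    rw [ha, div_le_one hκ1]; linarith
  have hcont : ∀ s : Set ℝ, (∀ x ∈ s, 0 < x) → ContinuousOn (qfun κ) s := by
    intro s hs x hx
    exact ((q_deriv κ (hs x hx)).continuousAt).continuousWithinAt
  rcases le_or_gt u a with hua | hua
  · -- both in Ioc 0 a, q strictly decreasing there
    have hanti : StrictAntiOn (qfun κ) (Set.Ioc 0 a) := by
      apply strictAntiOn_of_deriv_neg (convex_Ioc 0 a) (hcont _ (fun x hx => hx.1))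
      intro x hx
      rw [interior_Ioc] at hx
      rw [(q_deriv κ hx.1).deriv]
      apply div_neg_of_neg_of_pos
      · have : (κ - 1) * x < 1 := by
          have := hx.2
          rw [ha, lt_div_iff₀ hκ1] at this
          linarith [this]
        linarith
      · exact pow_pos hx.1 2
    have := hanti ⟨hu', le_of_lt (lt_of_lt_of_le huu hua)⟩ ⟨lt_trans hu' huu, hua⟩ huu
    linarith
  · -- u in (a,1): q u < q 1 = 0, contradiction
    exfalso
    have hmono : StrictMonoOn (qfun κ) (Set.Icc a 1) := by
      apply strictMonoOn_of_deriv_pos (convex_Icc a 1)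
        (hcont _ (fun x hx => lt_of_lt_of_le ha0 hx.1))
      intro x hx
      rw [interior_Icc] at hx
      have hx0 : 0 < x := lt_trans ha0 hx.1
      rw [(q_deriv κ hx0).deriv]
      apply div_pos
      · have : 1 < (κ - 1) * x := by
          have := hx.1
          rw [ha, div_lt_iff₀ hκ1] at this
          linarith
        linarith
      · positivity
    have := hmono ⟨le_of_lt hua, le_of_lt hu1⟩ ⟨ha1, le_refl 1⟩ hu1
    rw [q_one] at this
    linarith

lemma h_le_max {κ : ℝ} (hκ : 3 ≤ κ) {r x : ℝ} (hr0 : 0 < r) (hr1 : r < 1)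
    (hx : x ∈ Set.Icc 0 r) : hfun κ x ≤ max (hfun κ 0) (hfun κ r) := by
  have hκ0 : κ ≠ 0 := by linarith
  have hcont : ∀ s : Set ℝ, (∀ y ∈ s, y < 1) → ContinuousOn (hfun κ) s := by
    intro s hs y hy
    exact ((h_deriv κ hκ0 (hs y hy)).continuousAt).continuousWithinAt
  rcases eq_or_lt_of_le hx.1 with h0 | h0
  · rw [← h0]; exact le_max_left _ _
  rcases eq_or_lt_of_le hx.2 with hr | hr
  · rw [hr]; exact le_max_right _ _
  -- x ∈ (0, r)
  have hx1 : x < 1 := lt_trans hr hr1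
  rcases le_or_gt (qfun κ (1 - x)) 0 with hqx | hqx
  · -- h antitone on [0, x]
    have hanti : AntitoneOn (hfun κ) (Set.Icc 0 x) := by
      apply antitoneOn_of_deriv_nonpos (convex_Icc 0 x)
        (hcont _ (fun y hy => lt_of_le_of_lt hy.2 hx1))
      · intro y hy
        rw [interior_Icc] at hy
        exact ((h_deriv κ hκ0 (lt_trans hy.2 hx1)).differentiableAt).differentiableWithinAt
      · intro y hy
        rw [interior_Icc] at hy
        obtain ⟨hy1, hy2⟩ := hy
        rw [(h_deriv κ hκ0 (lt_trans hy2 hx1)).deriv]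
        apply div_nonpos_of_nonpos_of_nonneg _ (by linarith)
        by_contra hpos
        push_neg at hpos
        have := q_pos_of_lt hκ (u := 1 - y) (u' := 1 - x) (by linarith) (by linarith)
          (by linarith) hpos.le
        linarith
    have := hanti (Set.left_mem_Icc.2 (le_of_lt h0)) ⟨le_of_lt h0, le_refl x⟩ (le_of_lt h0)
    exact le_trans this (le_max_left _ _)
  · -- h strictly monotone on [x, r]
    have hmono : StrictMonoOn (hfun κ) (Set.Icc x r) := by
      apply strictMonoOn_of_deriv_pos (convex_Icc x r)
        (hcont _ (fun y hy => lt_of_le_of_lt hy.2 hr1))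
      intro y hy
      rw [interior_Icc] at hy
      obtain ⟨hy1, hy2⟩ := hy
      rw [(h_deriv κ hκ0 (lt_trans hy2 hr1)).deriv]
      apply div_pos _ (by linarith)
      exact q_pos_of_lt hκ (u := 1 - x) (u' := 1 - y) (by linarith) (by linarith)
        (by linarith) hqx.le
    have := hmono ⟨le_refl x, le_of_lt hr⟩ ⟨le_of_lt hr, le_refl r⟩ hr
    exact le_trans this.le (le_max_right _ _)

lemma phi_deriv (k : ℕ) (hk : 3 ≤ k) (d : ℝ) (x : ℝ) :
    HasDerivAt (fun α => Real.exp (-d * α ^ (k - 1)) + d * α ^ (k - 1)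
      - d * ((k : ℝ) - 1) / k * α ^ k - d / k)
      (d * ((k : ℝ) - 1) * x ^ (k - 2) * (1 - Real.exp (-d * x ^ (k - 1)) - x)) x := by
  have hk0 : (k : ℝ) ≠ 0 := by positivity
  have hcast : ((k - 1 : ℕ) : ℝ) = (k : ℝ) - 1 := by
    rw [Nat.cast_sub (by omega)]; norm_num
  have hidx : k - 1 - 1 = k - 2 := by omega
  have hp1 : HasDerivAt (fun α : ℝ => α ^ (k - 1)) (((k : ℝ) - 1) * x ^ (k - 2)) x := by
    have := hasDerivAt_pow (k - 1) x
    rwa [hidx, hcast] at this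
  have hexp : HasDerivAt (fun α : ℝ => Real.exp (-d * α ^ (k - 1)))
      (Real.exp (-d * x ^ (k - 1)) * (-d * (((k : ℝ) - 1) * x ^ (k - 2)))) x :=
    (hp1.const_mul (-d)).exp
  have h2 : HasDerivAt (fun α : ℝ => d * α ^ (k - 1)) (d * (((k : ℝ) - 1) * x ^ (k - 2))) x :=
    hp1.const_mul d
  have h3 : HasDerivAt (fun α : ℝ => d * ((k : ℝ) - 1) / k * α ^ k)
      (d * ((k : ℝ) - 1) / k * ((k : ℝ) * x ^ (k - 1))) x :=
    (hasDerivAt_pow k x).const_mul (d * ((k : ℝ) - 1) / k)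
  have := ((hexp.add h2).sub h3).sub_const (d / k)
  refine this.congr_deriv ?_
  have hpow : x ^ (k - 1) = x ^ (k - 2) * x := by
    rw [← pow_succ]; congr 1; omega
  rw [hpow]
  field_simp
  ring

lemma phi_fixed (k : ℕ) (hk : 3 ≤ k) (d : ℝ) {c : ℝ} (hc1 : c < 1)
    (hfix : Real.exp (-d * c ^ (k - 1)) = 1 - c) :
    Real.exp (-d * c ^ (k - 1)) + d * c ^ (k - 1) - d * ((k : ℝ) - 1) / k * c ^ k - d / k
      = 1 - d / k + hfun k c := by
  have hk0 : (k : ℝ) ≠ 0 := by positivity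
  have hlog : Real.log (1 - c) = -(d * c ^ (k - 1)) := by
    rw [← hfix, Real.log_exp]; ring
  have hck : c ^ k = c ^ (k - 1) * c := by
    rw [← pow_succ]; congr 1; omega
  rw [hfix, hck]
  unfold hfun
  rw [hlog]
  field_simp
  ring


theorem phi_sup_at_rho_above_threshold
    (k : ℕ) (hk : 3 ≤ k) (d : ℝ) (hd : 0 < d)
    (φ : ℝ → ℝ)
    (hφ : φ = fun α => Real.exp (-d * α ^ (k - 1)) + d * α ^ (k - 1)
      - d * ((k : ℝ) - 1) / k * α ^ k - d / k)
    (ρ : ℝ)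
    (hρ : ρ = sSup {x : ℝ | x ∈ Set.Icc (0 : ℝ) 1 ∧ x = 1 - Real.exp (-d * x ^ (k - 1))})
    (hcond : ρ - d * ρ ^ (k - 1) + d * (1 - 1 / (k : ℝ)) * ρ ^ k < 0) :
    (∀ α ∈ Set.Icc (0 : ℝ) 1, φ α ≤ φ ρ) ∧
    φ ρ = 1 - d / k - ρ + d * ρ ^ (k - 1) - d * ((k : ℝ) - 1) / k * ρ ^ k := by
  subst hφ
  have hk3 : (3 : ℝ) ≤ (k : ℝ) := by exact_mod_cast hk
  have hk0 : (k : ℝ) ≠ 0 := by positivity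
  have hkm1 : 0 < (k : ℝ) - 1 := by linarith
  have hconts : Continuous fun x : ℝ => x - 1 + Real.exp (-d * x ^ (k - 1)) := by continuity
  set S := {x : ℝ | x ∈ Set.Icc (0 : ℝ) 1 ∧ x = 1 - Real.exp (-d * x ^ (k - 1))} with hS
  have hSclosed : IsClosed S :=
    IsClosed.inter isClosed_Icc (isClosed_eq continuous_id (by continuity))
  have h0S : (0 : ℝ) ∈ S := by
    constructor
    · exact Set.left_mem_Icc.2 zero_le_one
    · simp [zero_pow (show k - 1 ≠ 0 by omega)]
  have hbdd : BddAbove S := BddAbove.mono (fun x hx => hx.1) bddAbove_Icc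
  have hρS : ρ ∈ S := hρ ▸ hSclosed.csSup_mem ⟨0, h0S⟩ hbdd
  have hub : ∀ y ∈ S, y ≤ ρ := fun y hy => hρ ▸ le_csSup hbdd hy
  have hρmem : ρ ∈ Set.Icc (0 : ℝ) 1 := hρS.1
  have hfix : Real.exp (-d * ρ ^ (k - 1)) = 1 - ρ := by
    have := hρS.2; linarith
  have hρ1 : ρ < 1 := by
    rcases lt_or_eq_of_le hρmem.2 with h | h
    · exact h
    · exfalso
      rw [h] at hfix
      simp at hfix
  have hρ0 : 0 < ρ := by
    rcases lt_or_eq_of_le hρmem.1 with h | h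
    · exact h
    · exfalso
      rw [← h] at hcond
      simp [zero_pow (show k - 1 ≠ 0 by omega), zero_pow (show k ≠ 0 by omega)] at hcond
  constructor
  · -- main inequality
    intro α hα
    have hFρ : ρ - 1 + Real.exp (-d * ρ ^ (k - 1)) = 0 := by rw [hfix]; ring
    have hnz : ∀ y, ρ < y → y ≤ 1 → 0 ≤ y →
        y - 1 + Real.exp (-d * y ^ (k - 1)) ≠ 0 := by
      intro y h1 h2 h0 hz
      exact absurd (hub y ⟨⟨h0, h2⟩, by linarith⟩) (not_le.2 h1)
    have hFpos : ∀ y, ρ < y → y ≤ 1 → 0 < y - 1 + Real.exp (-d * y ^ (k - 1)) := by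
      intro y h1 h2
      have hy0 : 0 ≤ y := le_trans hρmem.1 h1.le
      rcases lt_trichotomy (y - 1 + Real.exp (-d * y ^ (k - 1))) 0 with hneg | hzero | hpos
      · exfalso
        have hF1 : (0 : ℝ) < 1 - 1 + Real.exp (-d * 1 ^ (k - 1)) := by
          simp [Real.exp_pos]
        obtain ⟨z, hz, hz0⟩ := intermediate_value_Icc h2 hconts.continuousOn
          ⟨hneg.le, hF1.le⟩
        exact hnz z (lt_of_lt_of_le h1 hz.1) hz.2 (le_trans hy0 hz.1) hz0
      · exact absurd hzero (hnz y h1 h2 hy0)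
      · exact hpos
    have hφcont : Continuous (fun α : ℝ => Real.exp (-d * α ^ (k - 1)) + d * α ^ (k - 1)
        - d * ((k : ℝ) - 1) / k * α ^ k - d / k) := by fun_prop
    have hmono : ∀ a b : ℝ, 0 ≤ a → a ≤ b →
        (∀ x, a < x → x < b → x - 1 + Real.exp (-d * x ^ (k - 1)) < 0) →
        (fun α : ℝ => Real.exp (-d * α ^ (k - 1)) + d * α ^ (k - 1)
          - d * ((k : ℝ) - 1) / k * α ^ k - d / k) a ≤
        (fun α : ℝ => Real.exp (-d * α ^ (k - 1)) + d * α ^ (k - 1)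
          - d * ((k : ℝ) - 1) / k * α ^ k - d / k) b := by
      intro a b ha hab hneg
      rcases eq_or_lt_of_le hab with rfl | hlt
      · exact le_refl _
      have hsm := strictMonoOn_of_deriv_pos (convex_Icc a b) hφcont.continuousOn ?_
      · exact (hsm (Set.left_mem_Icc.2 hab) (Set.right_mem_Icc.2 hab) hlt).le
      · intro x hx
        rw [interior_Icc] at hx
        rw [(phi_deriv k hk d x).deriv]
        have hx0 : 0 < x := lt_of_le_of_lt ha hx.1
        have h1 : 0 < 1 - Real.exp (-d * x ^ (k - 1)) - x := by
          have := hneg x hx.1 hx.2; linarith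
        exact mul_pos (mul_pos (mul_pos hd hkm1) (pow_pos hx0 _)) h1
    have hanti : ∀ a b : ℝ, 0 ≤ a → a ≤ b →
        (∀ x, a < x → x < b → 0 < x - 1 + Real.exp (-d * x ^ (k - 1))) →
        (fun α : ℝ => Real.exp (-d * α ^ (k - 1)) + d * α ^ (k - 1)
          - d * ((k : ℝ) - 1) / k * α ^ k - d / k) b ≤
        (fun α : ℝ => Real.exp (-d * α ^ (k - 1)) + d * α ^ (k - 1)
          - d * ((k : ℝ) - 1) / k * α ^ k - d / k) a := by
      intro a b ha hab hpos
      rcases eq_or_lt_of_le hab with rfl | hlt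
      · exact le_refl _
      have hsm := strictAntiOn_of_deriv_neg (convex_Icc a b) hφcont.continuousOn ?_
      · exact (hsm (Set.left_mem_Icc.2 hab) (Set.right_mem_Icc.2 hab) hlt).le
      · intro x hx
        rw [interior_Icc] at hx
        rw [(phi_deriv k hk d x).deriv]
        have hx0 : 0 < x := lt_of_le_of_lt ha hx.1
        have h1 : 1 - Real.exp (-d * x ^ (k - 1)) - x < 0 := by
          have := hpos x hx.1 hx.2; linarith
        have h2 : 0 < d * ((k : ℝ) - 1) * x ^ (k - 2) :=
          mul_pos (mul_pos hd hkm1) (pow_pos hx0 _)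
        exact mul_neg_of_pos_of_neg h2 h1
    have hmaxfix : ∀ c, 0 ≤ c → c ≤ ρ → Real.exp (-d * c ^ (k - 1)) = 1 - c →
        (fun α : ℝ => Real.exp (-d * α ^ (k - 1)) + d * α ^ (k - 1)
          - d * ((k : ℝ) - 1) / k * α ^ k - d / k) c ≤
        (fun α : ℝ => Real.exp (-d * α ^ (k - 1)) + d * α ^ (k - 1)
          - d * ((k : ℝ) - 1) / k * α ^ k - d / k) ρ := by
      intro c hc0 hcρ hcfix
      have hc1 : c < 1 := lt_of_le_of_lt hcρ hρ1
      have e1 := phi_fixed k hk d hc1 hcfix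
      have e2 := phi_fixed k hk d hρ1 hfix
      simp only []
      rw [e1, e2]
      have h0 : hfun (k : ℝ) 0 = 0 := by simp [hfun]
      have hck : ρ ^ k = ρ ^ (k - 1) * ρ := by rw [← pow_succ]; congr 1; omega
      have hhρ : 0 < hfun (k : ℝ) ρ := by
        unfold hfun
        have hlog : Real.log (1 - ρ) = -(d * ρ ^ (k - 1)) := by
          rw [← hfix, Real.log_exp]; ring
        rw [hlog]
        rw [hck] at hcond
        have hexp : d * (1 - 1 / (k : ℝ)) * (ρ ^ (k - 1) * ρ) =
            ((k : ℝ) - 1) / k * ρ * (d * ρ ^ (k - 1)) := by field_simp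
        rw [hexp] at hcond
        nlinarith [hcond]
      have hle := h_le_max hk3 hρ0 hρ1 ⟨hc0, hcρ⟩
      rw [h0] at hle
      rw [max_eq_right hhρ.le] at hle
      linarith
    rcases le_or_gt α ρ with hαρ | hαρ
    · -- α ≤ ρ
      rcases lt_trichotomy (α - 1 + Real.exp (-d * α ^ (k - 1))) 0 with hFα | hFα | hFα
      · -- F α < 0 : go up to first zero c
        set T := {x : ℝ | x ∈ Set.Icc α ρ ∧ x - 1 + Real.exp (-d * x ^ (k - 1)) = 0} with hT
        have hTclosed : IsClosed T :=
          IsClosed.inter isClosed_Icc (isClosed_eq hconts continuous_const)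
        have hρT : ρ ∈ T := ⟨Set.right_mem_Icc.2 hαρ, hFρ⟩
        have hTbdd : BddBelow T := BddBelow.mono (fun x hx => hx.1) bddBelow_Icc
        have hcT : sInf T ∈ T := hTclosed.csInf_mem ⟨ρ, hρT⟩ hTbdd
        set c := sInf T with hc
        have hclb : ∀ y ∈ T, c ≤ y := fun y hy => csInf_le hTbdd hy
        have hFc : c - 1 + Real.exp (-d * c ^ (k - 1)) = 0 := hcT.2
        have hαc : α ≤ c := hcT.1.1
        have hcρ2 : c ≤ ρ := hcT.1.2
        have hneg : ∀ x, α < x → x < c → x - 1 + Real.exp (-d * x ^ (k - 1)) < 0 := by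
          intro y hy1 hy2
          rcases lt_trichotomy (y - 1 + Real.exp (-d * y ^ (k - 1))) 0 with h | h | h
          · exact h
          · exfalso
            have : y ∈ T := ⟨⟨hy1.le, le_trans hy2.le hcρ2⟩, h⟩
            exact absurd (hclb y this) (not_le.2 hy2)
          · exfalso
            obtain ⟨z, hz, hz0⟩ := intermediate_value_Icc hy1.le hconts.continuousOn
              ⟨hFα.le, h.le⟩
            have : z ∈ T := ⟨⟨hz.1, le_trans (le_trans hz.2 hy2.le) hcρ2⟩, hz0⟩
            exact absurd (hclb z this) (not_le.2 (lt_of_le_of_lt hz.2 hy2))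
        have step1 := hmono α c hα.1 hαc hneg
        have hcfix : Real.exp (-d * c ^ (k - 1)) = 1 - c := by linarith
        exact le_trans step1 (hmaxfix c (le_trans hα.1 hαc) hcρ2 hcfix)
      · -- F α = 0 : α is a fixed point
        have : Real.exp (-d * α ^ (k - 1)) = 1 - α := by linarith
        exact hmaxfix α hα.1 hαρ this
      · -- F α > 0 : go down to last zero b
        set B := {x : ℝ | x ∈ Set.Icc (0 : ℝ) α ∧ x - 1 + Real.exp (-d * x ^ (k - 1)) = 0}
          with hB
        have hBclosed : IsClosed B :=
          IsClosed.inter isClosed_Icc (isClosed_eq hconts continuous_const)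
        have h0B : (0 : ℝ) ∈ B := by
          refine ⟨Set.left_mem_Icc.2 hα.1, ?_⟩
          simp [zero_pow (show k - 1 ≠ 0 by omega)]
        have hBbdd : BddAbove B := BddAbove.mono (fun x hx => hx.1) bddAbove_Icc
        have hbB : sSup B ∈ B := hBclosed.csSup_mem ⟨0, h0B⟩ hBbdd
        set b := sSup B with hb
        have hbub : ∀ y ∈ B, y ≤ b := fun y hy => le_csSup hBbdd hy
        have hFb : b - 1 + Real.exp (-d * b ^ (k - 1)) = 0 := hbB.2
        have hb0 : 0 ≤ b := hbB.1.1
        have hbα : b ≤ α := hbB.1.2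
        have hpos : ∀ x, b < x → x < α → 0 < x - 1 + Real.exp (-d * x ^ (k - 1)) := by
          intro y hy1 hy2
          rcases lt_trichotomy (y - 1 + Real.exp (-d * y ^ (k - 1))) 0 with h | h | h
          · exfalso
            obtain ⟨z, hz, hz0⟩ := intermediate_value_Icc hy2.le hconts.continuousOn
              ⟨h.le, hFα.le⟩
            have : z ∈ B := ⟨⟨le_trans hb0 (le_trans hy1.le hz.1), hz.2⟩, hz0⟩
            exact absurd (hbub z this) (not_le.2 (lt_of_lt_of_le hy1 hz.1))
          · exfalso
            have : y ∈ B := ⟨⟨le_trans hb0 hy1.le, hy2.le⟩, h⟩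
            exact absurd (hbub y this) (not_le.2 hy1)
          · exact h
        have step1 := hanti b α hb0 hbα hpos
        have hbfix : Real.exp (-d * b ^ (k - 1)) = 1 - b := by linarith
        exact le_trans step1 (hmaxfix b hb0 (le_trans hbα hαρ) hbfix)
    · -- ρ < α : φ decreasing on [ρ, α]
      exact hanti ρ α hρmem.1 hαρ.le (fun x hx1 hx2 => hFpos x hx1 (le_trans hx2.le hα.2))
  · -- equality
    simp only []
    rw [hfix]
    ring
end
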